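/- Let α > 2, K > 0, C₅ > 0 and β ≥ 1 be real constants. Let v : [0,∞) → ℝ be differentiable, and suppose that for all ρ ≥ 0: (i) the function ρ ↦ v(ρ)² satisfies (v²)′(ρ) + (4 − 2|v(ρ)|)·v(ρ)² ≤ 2K·e^{−αρ}·|v(ρ)|; (ii) |v(ρ)| ≤ C₅·e^{−ρ}; (iii) v(ρ)² ≤ e^{−2βρ}. Then there exists a constant C₇ > 0, depending only on α, K, C₅, β and v(0), such that v(ρ)² ≤ C₇·(e^{−4ρ} + e^{−min(3β, α+β)·ρ}) for all ρ ≥ 0. -/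

import Mathlib

lemma abs_le_of_sq_le_my {a t : ℝ} (ht : 0 ≤ t) (h : a^2 ≤ t^2) : |a| ≤ t := by
  nlinarith [abs_nonneg a, sq_abs a]

lemma gron_my (w : ℝ → ℝ) (A b ν w0 : ℝ) (hbν : b ≠ ν) (hA : 0 ≤ A) (hw0' : 0 ≤ w0)
    (hdiff : ∀ ρ ≥ (0:ℝ), DifferentiableAt ℝ w ρ)
    (hineq : ∀ ρ ≥ (0:ℝ), deriv w ρ + b * w ρ ≤ A * Real.exp (-ν * ρ))
    (hw0 : w 0 ≤ w0) :
    ∀ ρ ≥ (0:ℝ), w ρ ≤ (w0 + A / |b - ν|) * (Real.exp (-b*ρ) + Real.exp (-ν*ρ)) := by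
  have hne : b - ν ≠ 0 := sub_ne_zero.mpr hbν
  set g : ℝ → ℝ := fun t => Real.exp (b*t) * w t - A * ((Real.exp ((b-ν)*t) - 1)/(b-ν)) with hg_def
  have hg : ∀ ρ : ℝ, 0 ≤ ρ → HasDerivAt g
      (Real.exp (b*ρ) * (deriv w ρ + b * w ρ) - A * Real.exp ((b-ν)*ρ)) ρ := by
    intro ρ hρ
    have h1 : HasDerivAt (fun t : ℝ => Real.exp (b*t)) (Real.exp (b*ρ) * b) ρ := by
      simpa using ((hasDerivAt_id ρ).const_mul b).exp
    have h2 := (hdiff ρ hρ).hasDerivAt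
    have h3 := h1.mul h2
    have h4 : HasDerivAt (fun t : ℝ => Real.exp ((b-ν)*t)) (Real.exp ((b-ν)*ρ) * (b-ν)) ρ := by
      simpa using ((hasDerivAt_id ρ).const_mul (b-ν)).exp
    have h5 := ((h4.sub_const 1).div_const (b-ν)).const_mul A
    have h6 := h3.sub h5
    refine h6.congr_deriv ?_
    rw [mul_div_cancel_right₀ _ hne]
    ring
  have hanti : AntitoneOn g (Set.Ici (0:ℝ)) := by
    apply antitoneOn_of_deriv_nonpos (convex_Ici 0)
    · exact fun x hx => ((hg x hx).differentiableAt).continuousAt.continuousWithinAt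
    · intro x hx
      rw [interior_Ici] at hx
      exact ((hg x hx.le).differentiableAt).differentiableWithinAt
    · intro x hx
      rw [interior_Ici] at hx
      rw [(hg x hx.le).deriv]
      have hin := hineq x hx.le
      have e1 : Real.exp ((b-ν)*x) = Real.exp (b*x) * Real.exp (-ν*x) := by
        rw [← Real.exp_add]; ring_nf
      rw [e1]
      have hp := Real.exp_pos (b*x)
      nlinarith [mul_le_mul_of_nonneg_left hin hp.le]
  intro ρ hρ
  have hgle : g ρ ≤ g 0 := hanti (Set.self_mem_Ici) hρ hρ
  have hg0 : g 0 = w 0 := by simp [hg_def]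
  rw [hg0] at hgle
  -- g ρ ≤ w 0 ≤ w0
  have key : Real.exp (b*ρ) * w ρ ≤ w0 + A * ((Real.exp ((b-ν)*ρ) - 1)/(b-ν)) := by
    have : Real.exp (b*ρ) * w ρ - A * ((Real.exp ((b-ν)*ρ) - 1)/(b-ν)) ≤ w0 := le_trans hgle hw0
    linarith
  have hebp := Real.exp_pos (b*ρ)
  -- w ρ ≤ w0 * exp(-bρ) + A * (exp(-νρ) - exp(-bρ))/(b-ν)
  have key2 : w ρ ≤ w0 * Real.exp (-b*ρ) + A * ((Real.exp (-ν*ρ) - Real.exp (-b*ρ))/(b-ν)) := by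
    have e2 : Real.exp (-b*ρ) * Real.exp (b*ρ) = 1 := by rw [← Real.exp_add]; simp
    have e3 : Real.exp (-b*ρ) * Real.exp ((b-ν)*ρ) = Real.exp (-ν*ρ) := by
      rw [← Real.exp_add]; ring_nf
    have := mul_le_mul_of_nonneg_left key (Real.exp_pos (-b*ρ)).le
    calc w ρ = Real.exp (-b*ρ) * (Real.exp (b*ρ) * w ρ) := by
            rw [← mul_assoc, e2, one_mul]
      _ ≤ Real.exp (-b*ρ) * (w0 + A * ((Real.exp ((b-ν)*ρ) - 1)/(b-ν))) := this
      _ = w0 * Real.exp (-b*ρ) + A * ((Real.exp (-b*ρ) * Real.exp ((b-ν)*ρ) - Real.exp (-b*ρ))/(b-ν)) := by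
            field_simp
      _ = w0 * Real.exp (-b*ρ) + A * ((Real.exp (-ν*ρ) - Real.exp (-b*ρ))/(b-ν)) := by rw [e3]
  have habs : (Real.exp (-ν*ρ) - Real.exp (-b*ρ))/(b-ν)
      ≤ (Real.exp (-b*ρ) + Real.exp (-ν*ρ))/|b-ν| := by
    calc (Real.exp (-ν*ρ) - Real.exp (-b*ρ))/(b-ν)
        ≤ |(Real.exp (-ν*ρ) - Real.exp (-b*ρ))/(b-ν)| := le_abs_self _
      _ = |Real.exp (-ν*ρ) - Real.exp (-b*ρ)|/|b-ν| := by rw [abs_div]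
      _ ≤ (Real.exp (-b*ρ) + Real.exp (-ν*ρ))/|b-ν| := by
          apply div_le_div_of_nonneg_right ?_ (abs_nonneg _)
          rw [abs_sub_comm, abs_le]
          constructor <;> nlinarith [Real.exp_pos (-b*ρ), Real.exp_pos (-ν*ρ)]
  have hfin := mul_le_mul_of_nonneg_left habs hA
  have hdivnonneg : 0 ≤ A / |b-ν| := div_nonneg hA (abs_nonneg _)
  have hexps : 0 < Real.exp (-b*ρ) + Real.exp (-ν*ρ) := by positivity
  calc w ρ ≤ w0 * Real.exp (-b*ρ) + A * ((Real.exp (-ν*ρ) - Real.exp (-b*ρ))/(b-ν)) := key2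
    _ ≤ w0 * (Real.exp (-b*ρ) + Real.exp (-ν*ρ)) + A * ((Real.exp (-b*ρ) + Real.exp (-ν*ρ))/|b-ν|) := by
        nlinarith [Real.exp_pos (-ν*ρ)]
    _ = (w0 + A / |b-ν|) * (Real.exp (-b*ρ) + Real.exp (-ν*ρ)) := by ring

lemma pass_lem (α K : ℝ) (v : ℝ → ℝ) (D μ : ℝ) (hD : 0 ≤ D) (hK : 0 ≤ K)
    (h : ∀ ρ ≥ (0:ℝ), deriv (fun t => (v t)^2) ρ + (4 - 2 * |v ρ|) * (v ρ)^2
        ≤ 2 * K * Real.exp (-α * ρ) * |v ρ|)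
    (hv : ∀ ρ ≥ (0:ℝ), |v ρ| ≤ D * Real.exp (-μ*ρ)) :
    ∀ ρ ≥ (0:ℝ), deriv (fun t => (v t)^2) ρ + 4 * (v ρ)^2
      ≤ (2*D^3 + 2*K*D) * Real.exp (-(min (3*μ) (α+μ)) * ρ) := by
  intro ρ hρ
  have h1 := h ρ hρ
  have h2 := hv ρ hρ
  have habs := abs_nonneg (v ρ)
  have hm3 : min (3*μ) (α+μ) ≤ 3*μ := min_le_left _ _
  have hmα : min (3*μ) (α+μ) ≤ α+μ := min_le_right _ _
  have t3 : Real.exp (-(3*μ)*ρ) ≤ Real.exp (-(min (3*μ) (α+μ)) * ρ) := by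
    apply Real.exp_le_exp.mpr
    apply mul_le_mul_of_nonneg_right (neg_le_neg hm3) hρ
  have t4 : Real.exp (-(α+μ)*ρ) ≤ Real.exp (-(min (3*μ) (α+μ)) * ρ) := by
    apply Real.exp_le_exp.mpr
    apply mul_le_mul_of_nonneg_right (neg_le_neg hmα) hρ
  have t2 : 2 * |v ρ| * (v ρ)^2 ≤ 2*D^3 * Real.exp (-(3*μ)*ρ) := by
    have e1 : |v ρ| * (v ρ)^2 = |v ρ|^3 := by rw [← sq_abs]; ring
    have e2 : (D * Real.exp (-μ*ρ))^3 = D^3 * Real.exp (-(3*μ)*ρ) := by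
      rw [show (-(3*μ)*ρ) = (-μ*ρ) + ((-μ*ρ) + (-μ*ρ)) by ring, Real.exp_add, Real.exp_add]
      ring
    have e3 : |v ρ|^3 ≤ (D * Real.exp (-μ*ρ))^3 := by
      apply pow_le_pow_left₀ habs h2
    nlinarith [e3]
  have t1 : 2*K*Real.exp (-α*ρ)*|v ρ| ≤ 2*K*D * Real.exp (-(α+μ)*ρ) := by
    have e1 : Real.exp (-α*ρ) * (D * Real.exp (-μ*ρ)) = D * Real.exp (-(α+μ)*ρ) := by
      rw [show (-(α+μ)*ρ) = (-α*ρ) + (-μ*ρ) by ring, Real.exp_add]; ring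
    have := mul_le_mul_of_nonneg_left h2 (by positivity : (0:ℝ) ≤ 2*K*Real.exp (-α*ρ))
    nlinarith [Real.exp_pos (-α*ρ)]
  have u3 := mul_le_mul_of_nonneg_left t3 (by positivity : (0:ℝ) ≤ 2*D^3)
  have u4 := mul_le_mul_of_nonneg_left t4 (by positivity : (0:ℝ) ≤ 2*K*D)
  nlinarith [u3, u4]


/-- **Bootstrapping step in the proof of Lemma 2.3.** Suppose `v` is differentiable with
`(v²)' + (4 - 2|v|)·v² ≤ 2K·exp(-αρ)·|v|`, `|v| ≤ C₅·exp(-ρ)` and `v² ≤ exp(-2βρ)` on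
`[0,∞)`, where `α > 2`, `K, C₅ > 0`, `β ≥ 1`. Then `v² ≤ C₇·(exp(-4ρ) + exp(-min(3β, α+β)·ρ))`
for a constant `C₇ > 0` depending only on `α`, `K`, `C₅`, `β` and `v 0`. -/
theorem riccati_bootstrap (α K C₅ β v₀ : ℝ) (hα : 2 < α) (hK : 0 < K) (hC₅ : 0 < C₅)
    (hβ : 1 ≤ β) :
    ∃ C₇ > 0, ∀ v : ℝ → ℝ,
      (∀ ρ ≥ (0:ℝ), DifferentiableAt ℝ v ρ) →
      (∀ ρ ≥ (0:ℝ), deriv (fun t => (v t)^2) ρ + (4 - 2 * |v ρ|) * (v ρ)^2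
          ≤ 2 * K * Real.exp (-α * ρ) * |v ρ|) →
      (∀ ρ ≥ (0:ℝ), |v ρ| ≤ C₅ * Real.exp (-ρ)) →
      (∀ ρ ≥ (0:ℝ), (v ρ)^2 ≤ Real.exp (-2 * β * ρ)) →
      v 0 = v₀ →
      ∀ ρ ≥ (0:ℝ), (v ρ)^2
          ≤ C₇ * (Real.exp (-4 * ρ) + Real.exp (-(min (3 * β) (α + β)) * ρ)) := by
  have hA1 : (0:ℝ) ≤ 2*(1:ℝ)^3 + 2*K*1 := by nlinarith
  by_cases hcase : min (3 * β) (α + β) = 4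
  · -- resonant case, two passes
    set ε : ℝ := min (α-2) 1 / 2 with hεdef
    have hε0 : 0 < ε := by
      have h1 : (0:ℝ) < min (α-2) 1 := lt_min (by linarith) one_pos
      positivity
    have hε1 : ε ≤ 1/2 := by
      have : min (α-2) 1 ≤ 1 := min_le_right _ _
      rw [hεdef]; linarith
    have hεα : ε < α - 2 := by
      have h1 : min (α-2) 1 ≤ α-2 := min_le_left _ _
      have h2 : (0:ℝ) < min (α-2) 1 := lt_min (by linarith) one_pos
      rw [hεdef]; linarith
    set μ : ℝ := (4-ε)/2 with hμdef
    set C₁ : ℝ := v₀^2 + (2*(1:ℝ)^3 + 2*K*1)/|(4-ε) - 4| with hC₁def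
    have habsε : |(4-ε) - 4| = ε := by
      rw [show (4-ε) - 4 = -ε by ring, abs_neg, abs_of_pos hε0]
    have hC₁pos : 0 < C₁ := by
      rw [hC₁def, habsε]
      have : 0 < (2*(1:ℝ)^3 + 2*K*1)/ε := by positivity
      nlinarith [sq_nonneg v₀]
    set E : ℝ := 2*C₁ with hEdef
    have hEpos : 0 < E := by positivity
    set D : ℝ := Real.sqrt E with hDdef
    have hDpos : 0 < D := Real.sqrt_pos.mpr hEpos
    set ν₂ : ℝ := min (3*μ) (α+μ) with hν₂def
    have hν₂gt4 : (4:ℝ) < ν₂ := by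
      apply lt_min
      · rw [hμdef]; linarith
      · rw [hμdef]; linarith
    set A₂ : ℝ := 2*D^3 + 2*K*D with hA₂def
    have hA₂pos : 0 < A₂ := by positivity
    set C₂ : ℝ := v₀^2 + A₂/|(4:ℝ) - ν₂| with hC₂def
    have habsν₂ : |(4:ℝ) - ν₂| = ν₂ - 4 := by
      rw [abs_of_neg (by linarith)]; ring
    have hC₂pos : 0 < C₂ := by
      rw [hC₂def, habsν₂]
      have : 0 < A₂/(ν₂-4) := by
        apply div_pos hA₂pos; linarith
      nlinarith [sq_nonneg v₀]
    refine ⟨C₂, hC₂pos, ?_⟩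
    intro v hdiffv h hv1 hv2 hv0 ρ hρ
    have hdiffw : ∀ ρ ≥ (0:ℝ), DifferentiableAt ℝ (fun t => (v t)^2) ρ :=
      fun ρ hρ => (hdiffv ρ hρ).pow 2
    have hw0 : (fun t => (v t)^2) 0 ≤ v₀^2 := by simp only []; rw [hv0]
    -- pass 1
    have hvβ : ∀ ρ ≥ (0:ℝ), |v ρ| ≤ 1 * Real.exp (-β*ρ) := by
      intro ρ hρ
      apply abs_le_of_sq_le_my (by positivity)
      have e1 : (1 * Real.exp (-β*ρ))^2 = Real.exp (-2*β*ρ) := by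
        rw [one_mul, sq, ← Real.exp_add]; ring_nf
      rw [e1]; exact hv2 ρ hρ
    have hp1 := pass_lem α K v 1 β zero_le_one hK.le h hvβ
    rw [hcase] at hp1
    have hineq1 : ∀ ρ ≥ (0:ℝ), deriv (fun t => (v t)^2) ρ + (4-ε) * (v ρ)^2
        ≤ (2*(1:ℝ)^3 + 2*K*1) * Real.exp (-(4:ℝ) * ρ) := by
      intro ρ hρ
      have h1 := hp1 ρ hρ
      have h2 : 0 ≤ ε * (v ρ)^2 := by positivity
      nlinarith
    have hg1 := gron_my (fun t => (v t)^2) (2*(1:ℝ)^3 + 2*K*1) (4-ε) 4 (v₀^2)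
      (by intro hh; linarith) hA1 (sq_nonneg v₀) hdiffw hineq1 hw0
    have hw1 : ∀ ρ ≥ (0:ℝ), (v ρ)^2 ≤ E * Real.exp (-(4-ε)*ρ) := by
      intro ρ hρ
      have h1 : (v ρ)^2 ≤ C₁ * (Real.exp (-(4-ε)*ρ) + Real.exp (-4*ρ)) := hg1 ρ hρ
      have he : Real.exp (-4*ρ) ≤ Real.exp (-(4-ε)*ρ) :=
        Real.exp_le_exp.mpr (mul_le_mul_of_nonneg_right (by linarith) hρ)
      have h2 := mul_le_mul_of_nonneg_left (add_le_add_left he (Real.exp (-(4-ε)*ρ))) hC₁pos.le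
      rw [hEdef]
      linarith
    -- pass 2
    have hvμ : ∀ ρ ≥ (0:ℝ), |v ρ| ≤ D * Real.exp (-μ*ρ) := by
      intro ρ hρ
      apply abs_le_of_sq_le_my (by positivity)
      have e1 : (D * Real.exp (-μ*ρ))^2 = E * Real.exp (-(4-ε)*ρ) := by
        rw [mul_pow, hDdef, Real.sq_sqrt hEpos.le, sq, ← Real.exp_add, hμdef]
        ring_nf
      rw [e1]; exact hw1 ρ hρ
    have hp2 := pass_lem α K v D μ hDpos.le hK.le h hvμ
    rw [← hν₂def, ← hA₂def] at hp2
    have hg2 := gron_my (fun t => (v t)^2) A₂ 4 ν₂ (v₀^2)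
      (ne_of_lt hν₂gt4) hA₂pos.le (sq_nonneg v₀) hdiffw hp2 hw0
    have h1 : (v ρ)^2 ≤ C₂ * (Real.exp (-4*ρ) + Real.exp (-ν₂*ρ)) := hg2 ρ hρ
    rw [hcase]
    have he : Real.exp (-ν₂*ρ) ≤ Real.exp (-4*ρ) :=
      Real.exp_le_exp.mpr (mul_le_mul_of_nonneg_right (by linarith) hρ)
    have h2 := mul_le_mul_of_nonneg_left (add_le_add_left he (Real.exp (-4*ρ))) hC₂pos.le
    linarith
  · -- non-resonant case, one pass
    have habs : 0 < |(4:ℝ) - min (3 * β) (α + β)| := by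
      apply abs_pos.mpr
      intro hh
      exact hcase (by linarith [sub_eq_zero.mp hh])
    refine ⟨v₀^2 + (2*(1:ℝ)^3 + 2*K*1)/|(4:ℝ) - min (3 * β) (α + β)|, ?_, ?_⟩
    · have : 0 < (2*(1:ℝ)^3 + 2*K*1)/|(4:ℝ) - min (3 * β) (α + β)| := by
        apply div_pos (by nlinarith) habs
      nlinarith [sq_nonneg v₀]
    intro v hdiffv h hv1 hv2 hv0 ρ hρ
    have hdiffw : ∀ ρ ≥ (0:ℝ), DifferentiableAt ℝ (fun t => (v t)^2) ρ :=
      fun ρ hρ => (hdiffv ρ hρ).pow 2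
    have hw0 : (fun t => (v t)^2) 0 ≤ v₀^2 := by simp only []; rw [hv0]
    have hvβ : ∀ ρ ≥ (0:ℝ), |v ρ| ≤ 1 * Real.exp (-β*ρ) := by
      intro ρ hρ
      apply abs_le_of_sq_le_my (by positivity)
      have e1 : (1 * Real.exp (-β*ρ))^2 = Real.exp (-2*β*ρ) := by
        rw [one_mul, sq, ← Real.exp_add]; ring_nf
      rw [e1]; exact hv2 ρ hρ
    have hp1 := pass_lem α K v 1 β zero_le_one hK.le h hvβ
    have hg1 := gron_my (fun t => (v t)^2) (2*(1:ℝ)^3 + 2*K*1) 4 (min (3 * β) (α + β)) (v₀^2)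
      (fun hh => hcase hh.symm) hA1 (sq_nonneg v₀) hdiffw hp1 hw0
    exact hg1 ρ hρ
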